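/- arXiv:2011.03223 — 2 statements merged into one kernel-verified Lean document; each statement's English description precedes it below -/
import Mathlib

section
/- Let β > 1, 0 < σ² < 1 with β + σ² > 2 and σ² < β/(2β−1). Define v = (β − σ²)/√(2(β−1)(1−σ²)) and φ(u) = βu + (1−u) − v²/(2(σ²u + 1−u)) for u ∈ [0,1]. Then φ is concave on [0,1], attains its maximum at p = (σ² + β − 2)/(2(β−1)(1−σ²)), and φ(p) = 0. -/
/-- The rate function `φ(u) = βu + (1−u) − v²/(2(σ²u+1−u))` is concave on `[0,1]`,
attains its maximum on `[0,1]` at `p = (σ²+β−2)/(2(β−1)(1−σ²))`, and `φ(p) = 0`. -/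
theorem rate_function_concave_max (β σ2 v p : ℝ) (φ : ℝ → ℝ)
    (hβ : 1 < β) (hσ0 : 0 < σ2) (hσ1 : σ2 < 1)
    (h1 : 2 < β + σ2) (h2 : σ2 < β / (2 * β - 1))
    (hv : v = (β - σ2) / Real.sqrt (2 * (β - 1) * (1 - σ2)))
    (hp : p = (σ2 + β - 2) / (2 * (β - 1) * (1 - σ2)))
    (hφ : ∀ u, φ u = β * u + (1 - u) - v ^ 2 / (2 * (σ2 * u + 1 - u))) :
    ConcaveOn ℝ (Set.Icc 0 1) φ ∧ (∀ u ∈ Set.Icc (0 : ℝ) 1, φ u ≤ φ p) ∧ φ p = 0 := by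
  have hc : (0:ℝ) < 1 - σ2 := by linarith
  have hb1 : (0:ℝ) < β - 1 := by linarith
  have hs : (0:ℝ) < 2 * (β - 1) * (1 - σ2) := by positivity
  have hv2 : v ^ 2 = (β - σ2) ^ 2 / (2 * (β - 1) * (1 - σ2)) := by
    rw [hv, div_pow, Real.sq_sqrt hs.le]
  have hDpos : ∀ u ∈ Set.Icc (0:ℝ) 1, 0 < σ2 * u + 1 - u := by
    intro u hu
    obtain ⟨h0, h1'⟩ := hu
    nlinarith
  have hDp : σ2 * p + 1 - p = (β - σ2) / (2 * (β - 1)) := by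
    rw [hp]; field_simp; ring
  have hβσ : (0:ℝ) < β - σ2 := by linarith
  have hφp : φ p = 0 := by
    rw [hφ, hv2, hDp, hp]
    field_simp
    ring
  refine ⟨⟨convex_Icc 0 1, ?_⟩, ?_, hφp⟩
  · intro x hx y hy a b ha hb hab
    have hb' : b = 1 - a := by linarith
    subst hb'
    simp only [smul_eq_mul, hφ]
    have hDx := hDpos x hx
    have hDy := hDpos y hy
    set Dx := σ2 * x + 1 - x with hDxdef
    set Dy := σ2 * y + 1 - y with hDydef
    have hDz : 0 < a * Dx + (1 - a) * Dy := by
      rcases eq_or_lt_of_le ha with h | h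
      · rw [← h]; simpa using hDy
      · nlinarith [mul_nonneg hb hDy.le, mul_pos h hDx]
    have hrw : σ2 * (a * x + (1 - a) * y) + 1 - (a * x + (1 - a) * y) =
        a * Dx + (1 - a) * Dy := by rw [hDxdef, hDydef]; ring
    rw [hrw]
    have e : a * (v ^ 2 / (2 * Dx)) + (1 - a) * (v ^ 2 / (2 * Dy)) -
        v ^ 2 / (2 * (a * Dx + (1 - a) * Dy)) =
        v ^ 2 * (a * (1 - a) * (Dx - Dy) ^ 2) /
          (2 * Dx * Dy * (a * Dx + (1 - a) * Dy)) := by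
      field_simp
      ring
    have key : 0 ≤ a * (v ^ 2 / (2 * Dx)) + (1 - a) * (v ^ 2 / (2 * Dy)) -
        v ^ 2 / (2 * (a * Dx + (1 - a) * Dy)) := by
      rw [e]
      apply div_nonneg
      · exact mul_nonneg (sq_nonneg v)
          (mul_nonneg (mul_nonneg ha hb) (sq_nonneg _))
      · exact (mul_pos (by positivity) hDz).le
    nlinarith [key]
  · intro u hu
    rw [hφp, hφ, hv2]
    have hD := hDpos u hu
    have h3 : (β - σ2) ^ 2 / (2 * (β - 1) * (1 - σ2)) / (2 * (σ2 * u + 1 - u)) =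
        (β - σ2) ^ 2 / (2 * (β - 1) * (1 - σ2) * (2 * (σ2 * u + 1 - u))) := by
      rw [div_div]
    have h4 : 0 < 2 * (β - 1) * (1 - σ2) * (2 * (σ2 * u + 1 - u)) := by positivity
    rw [h3, sub_nonpos, le_div_iff₀ h4]
    nlinarith [sq_nonneg ((β + σ2 - 2) - 2 * (β - 1) * (1 - σ2) * u)]
end

section
/- Let β > 1, 0 < σ² < 1 with β + σ² > 2 and σ² < β/(2β−1). Define v and φ as before: v = (β−σ²)/√(2(β−1)(1−σ²)), φ(u) = βu + 1−u − v²/(2(σ²u+1−u)), and p = (σ²+β−2)/(2(β−1)(1−σ²)). Then there exists δ > 0 such that φ(u) ≤ −δ(u−p)² for all u ∈ [0,1]. -/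
/-- There exists `δ > 0` with `φ(u) ≤ −δ(u−p)²` on `[0,1]`, where
`φ(u) = βu + 1−u − v²/(2(σ²u+1−u))` and `p` is the maximizer of `φ`. -/
theorem rate_function_quadratic_bound (β σ2 v p : ℝ) (φ : ℝ → ℝ)
    (hβ : 1 < β) (hσ0 : 0 < σ2) (hσ1 : σ2 < 1)
    (h1 : 2 < β + σ2) (h2 : σ2 < β / (2 * β - 1))
    (hv : v = (β - σ2) / Real.sqrt (2 * (β - 1) * (1 - σ2)))
    (hp : p = (σ2 + β - 2) / (2 * (β - 1) * (1 - σ2)))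
    (hφ : ∀ u, φ u = β * u + (1 - u) - v ^ 2 / (2 * (σ2 * u + 1 - u))) :
    ∃ δ > 0, ∀ u ∈ Set.Icc (0 : ℝ) 1, φ u ≤ -δ * (u - p) ^ 2 := by
  have hD : (0:ℝ) < 2 * (β - 1) * (1 - σ2) := by nlinarith
  have hv2 : v ^ 2 = (β - σ2) ^ 2 / (2 * (β - 1) * (1 - σ2)) := by
    rw [hv, div_pow, Real.sq_sqrt hD.le]
  refine ⟨(β - 1) * (1 - σ2), by nlinarith, fun u hu => ?_⟩
  obtain ⟨hu0, hu1⟩ := hu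
  have hw : 0 < σ2 * u + 1 - u := by nlinarith
  have hw1 : σ2 * u + 1 - u ≤ 1 := by nlinarith
  have key : φ u = -((β - 1) * (1 - σ2)) * (u - p) ^ 2 / (σ2 * u + 1 - u) := by
    rw [hφ, hv2, hp]
    have hb1 : β - 1 ≠ 0 := ne_of_gt (by linarith)
    have hs1 : 1 - σ2 ≠ 0 := ne_of_gt (by linarith)
    have e : σ2 * u + 1 - u = 1 - u + u * σ2 := by ring
    have hw0 : 1 - u + u * σ2 ≠ 0 := e ▸ hw.ne'
    rw [e]
    field_simp
    ring
  rw [key]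
  rw [div_le_iff₀ hw]
  nlinarith [sq_nonneg (u - p), mul_nonneg (mul_nonneg (by nlinarith : (0:ℝ) ≤ (β-1)*(1-σ2)) (sq_nonneg (u-p))) (by nlinarith : (0:ℝ) ≤ 1 - (σ2*u+1-u))]
end
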